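/- Let N be an odd natural number with N - 1 = F·R where gcd(F, R) = 1 and F > √N. If there exists an integer a with a^(N-1) ≡ 1 (mod N) and gcd(a^((N-1)/q) - 1, N) = 1 for every prime q dividing F, then N is prime. -/

import Mathlib

/-- Pocklington's primality criterion: let `N` be odd with `N - 1 = F·R`,
`gcd(F,R) = 1` and `F > √N`. If some integer `a` satisfies `a^(N-1) ≡ 1 (mod N)` and
`gcd(a^((N-1)/q) - 1, N) = 1` for every prime `q ∣ F`, then `N` is prime. -/
theorem pocklington (N F R : ℕ) (hodd : Odd N) (hFR : N - 1 = F * R)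
    (hgcd : Nat.gcd F R = 1) (hF : (F : ℝ) > Real.sqrt N) (a : ℤ)
    (ha : (a : ZMod N) ^ (N - 1) = 1)
    (hq : ∀ q : ℕ, q.Prime → q ∣ F → Int.gcd (a ^ ((N - 1) / q) - 1) N = 1) :
    N.Prime := by
  -- F is positive
  have hFpos : 0 < F := by
    rcases Nat.eq_zero_or_pos F with h | h
    · exfalso
      rw [h] at hF
      simp at hF
      exact absurd hF (not_lt.mpr (Real.sqrt_nonneg _))
    · exact h
  -- N ≠ 1
  rcases eq_or_ne N 1 with h1 | h1
  · exfalso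
    subst h1
    simp at hFR
    have hF2 : 1 < F := by
      have hh : (1:ℝ) < (F:ℝ) := by simpa using hF
      exact_mod_cast hh
    rcases hFR with hFR | hFR
    · omega
    · rw [hFR] at hgcd
      simp at hgcd
      omega
  have hN2 : 2 ≤ N := by
    rcases hodd with ⟨k, hk⟩
    omega
  have hN1pos : 0 < N - 1 := by omega
  -- suppose N is not prime
  by_contra hNp
  set p := N.minFac with hp_def
  have hp : p.Prime := Nat.minFac_prime h1
  have hpd : p ∣ N := Nat.minFac_dvd N
  have hpsq : p * p ≤ N := by
    have := Nat.minFac_sq_le_self (by omega : 0 < N) hNp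
    simpa [sq] using this
  haveI : Fact p.Prime := ⟨hp⟩
  -- cast a^(N-1) = 1 to ZMod p
  have hap : (a : ZMod p) ^ (N - 1) = 1 := by
    have h2 : (ZMod.castHom hpd (ZMod p)) ((a : ZMod N) ^ (N - 1)) = 1 := by
      rw [ha]; exact map_one _
    rwa [map_pow, map_intCast] at h2
  -- a is a unit mod p
  have hu : IsUnit (a : ZMod p) := by
    exact IsUnit.of_pow_eq_one hap (by omega)
  set u : (ZMod p)ˣ := hu.unit with hu_def
  have hu_coe : (u : ZMod p) = (a : ZMod p) := hu.unit_spec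
  have hu1 : u ^ (N - 1) = 1 := by
    ext
    push_cast [hu_coe]
    exact hap
  -- for each prime q ∣ F, a^((N-1)/q) ≠ 1 mod p
  have hne : ∀ q : ℕ, q.Prime → q ∣ F → u ^ ((N - 1) / q) ≠ 1 := by
    intro q hq' hqF h
    have h' : (a : ZMod p) ^ ((N - 1) / q) = 1 := by
      rw [← hu_coe, ← Units.val_pow_eq_pow_val, h, Units.val_one]
    have hdvd : (p : ℤ) ∣ a ^ ((N - 1) / q) - 1 := by
      have : ((a ^ ((N - 1) / q) - 1 : ℤ) : ZMod p) = 0 := by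
        push_cast
        rw [h']
        ring
      exact (ZMod.intCast_zmod_eq_zero_iff_dvd _ _).mp this
    have hdN : (p : ℤ) ∣ (N : ℤ) := Int.natCast_dvd_natCast.mpr hpd
    have hg : (p : ℤ) ∣ (Int.gcd (a ^ ((N - 1) / q) - 1) N : ℤ) :=
      Int.dvd_coe_gcd hdvd hdN
    rw [hq q hq' hqF] at hg
    have : (p : ℤ) ∣ 1 := by exact_mod_cast hg
    have := Int.le_of_dvd one_pos this
    have := hp.two_le
    omega
  have hFdvd : F ∣ p - 1 := by
    have hp1pos : 0 < p - 1 := by have := hp.two_le; omega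
    rw [← Nat.factorization_le_iff_dvd (by omega) (by omega)]
    intro q
    by_cases hq0 : F.factorization q = 0
    · simp [hq0]
    set e := F.factorization q with he_def
    have he1 : 1 ≤ e := Nat.pos_of_ne_zero hq0
    have hqprime : q.Prime := by
      have : q ∈ F.factorization.support := Finsupp.mem_support_iff.mpr hq0
      exact Nat.prime_of_mem_primeFactors (by rwa [Nat.support_factorization] at this)
    have hqF : q ∣ F := Nat.dvd_of_factorization_pos hq0
    have hqeF : q ^ e ∣ F := Nat.ordProj_dvd F q
    have hFN : F ∣ N - 1 := ⟨R, hFR⟩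
    have hqe : q ^ e ∣ N - 1 := hqeF.trans hFN
    -- the element of order q^e
    set c : (ZMod p)ˣ := u ^ ((N - 1) / q ^ e) with hc_def
    have hc1 : c ^ q ^ e = 1 := by
      rw [hc_def, ← pow_mul, Nat.div_mul_cancel hqe, hu1]
    have hexp : (N - 1) / q ^ e * q ^ (e - 1) = (N - 1) / q := by
      obtain ⟨m, hm⟩ := hqe
      have hqpos : 0 < q := hqprime.pos
      have hqepos : 0 < q ^ e := pow_pos hqpos e
      have hqe' : q ^ e = q * q ^ (e - 1) := by
        rw [← pow_succ']
        congr 1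
        omega
      rw [hm, Nat.mul_div_cancel_left _ hqepos, hqe', mul_assoc,
        Nat.mul_div_cancel_left _ hqpos, mul_comm]
    have hc2 : c ^ q ^ (e - 1) ≠ 1 := by
      rw [hc_def, ← pow_mul, hexp]
      exact hne q hqprime hqF
    have hord : orderOf c = q ^ e := by
      have hdvd : orderOf c ∣ q ^ e := orderOf_dvd_of_pow_eq_one hc1
      obtain ⟨k, hk, hk'⟩ := (Nat.dvd_prime_pow hqprime).mp hdvd
      rcases Nat.lt_or_ge k e with hlt | hge
      · exfalso
        apply hc2
        apply orderOf_dvd_iff_pow_eq_one.mp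
        rw [hk']
        exact pow_dvd_pow q (by omega)
      · rw [hk']
        congr 1
        omega
    have hdvd_card : q ^ e ∣ p - 1 := by
      rw [← hord, ← ZMod.card_units p]
      exact orderOf_dvd_card
    have := (Nat.Prime.pow_dvd_iff_le_factorization hqprime (by omega)).mp hdvd_card
    exact this
  -- conclude: p - 1 ≥ F yet p ≤ √N < F
  have hFle : F ≤ p - 1 := Nat.le_of_dvd (by have := hp.two_le; omega) hFdvd
  have hple : (p : ℝ) ≤ Real.sqrt N := by
    have h1p : ((p : ℝ) * p : ℝ) ≤ (N : ℝ) := by exact_mod_cast hpsq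
    have h2p : Real.sqrt ((p : ℝ) * p) ≤ Real.sqrt N := Real.sqrt_le_sqrt h1p
    rwa [Real.sqrt_mul_self (by positivity)] at h2p
  have : (F : ℝ) ≤ (p : ℝ) - 1 := by
    have : (F : ℝ) ≤ ((p - 1 : ℕ) : ℝ) := by exact_mod_cast hFle
    have hp2 : (2 : ℝ) ≤ (p : ℝ) := by exact_mod_cast hp.two_le
    rw [Nat.cast_sub (by have := hp.two_le; omega)] at this
    simpa using this
  linarith
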